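/- Let N ≥ 1 and let Q = (q_{ij}) be a symmetric N×N real matrix. For each n ≥ 1 define the symmetric n×n matrix Q_n = (q̃_{ij})_{i,j∈[n]} by q̃_{ij} := q_{ī j̄}, where ī, j̄ ∈ [N] are determined by i ≡ ī (mod N) and j ≡ j̄ (mod N). Let t be a complex-valued function on pair partitions satisfying hypotheses (i)–(iii) of the context. For a pair partition V define t^{*n}_{Q_n}(V) := n^{−|V|} · Σ_{c : V → [n]} ( Π_{((p,p')∈cr(V)} q̃_{c(p),c(p')} ) · ( Π_{b∈[n]} t(c^{−1}(b)) ), and t_Q(V) := N^{−|V|} · Σ_{d : V → [N]} Π_{((p,p')∈cr(V)} q_{d(p),d(p')}. Then for every pair partition V, t^{*n}_{Q_n}(V) converges to t_Q(V) as n → ∞. -/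

import Mathlib

open Finset Filter

/-- `V` is a pair partition (of its underlying finite point set): pairs `(l,r)` with
`l < r` and pairwise distinct entries. -/
def IsPP (V : Finset (ℕ × ℕ)) : Prop :=
  (∀ p ∈ V, p.1 < p.2) ∧
  (∀ p ∈ V, ∀ q ∈ V, p ≠ q → p.1 ≠ q.1 ∧ p.1 ≠ q.2 ∧ p.2 ≠ q.1 ∧ p.2 ≠ q.2)

/-- The underlying point set of a pair partition. -/
def ppPoints (V : Finset (ℕ × ℕ)) : Finset ℕ :=
  V.image Prod.fst ∪ V.image Prod.snd

/-- The set of crossings `cr(V) = {((a₁,z₁),(a₂,z₂)) ∈ V × V : a₁ < a₂ < z₁ < z₂}`. -/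
def ppCrossings (V : Finset (ℕ × ℕ)) : Finset ((ℕ × ℕ) × (ℕ × ℕ)) :=
  (V ×ˢ V).filter fun pq => pq.1.1 < pq.2.1 ∧ pq.2.1 < pq.1.2 ∧ pq.1.2 < pq.2.2

/-- The value of a coloring `c : V → [n]` on a pair `p`, extended by `0` off `V`. -/
def colorOf (V : Finset (ℕ × ℕ)) (n : ℕ)
    (c : {p // p ∈ V} → {b // b ∈ Finset.Icc 1 n}) (p : ℕ × ℕ) : ℕ :=
  if h : p ∈ V then (c ⟨p, h⟩ : ℕ) else 0

/-- `t^{*n}_{Q_n}(V) := n^{-|V|} Σ_{c : V → [n]} (Π_{(p,p') ∈ cr(V)} q̃_{c(p),c(p')})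
(Π_{b ∈ [n]} t(c^{-1}(b)))`. -/
noncomputable def tQn (t : Finset (ℕ × ℕ) → ℂ) (qt : ℕ → ℕ → ℝ) (n : ℕ)
    (V : Finset (ℕ × ℕ)) : ℂ :=
  (n : ℂ)⁻¹ ^ V.card *
    ∑ c : {p // p ∈ V} → {b // b ∈ Finset.Icc 1 n},
      (∏ x ∈ ppCrossings V, ((qt (colorOf V n c x.1) (colorOf V n c x.2) : ℝ) : ℂ)) *
        ∏ b ∈ Finset.Icc 1 n, t (V.filter fun p => colorOf V n c p = b)

/-- `t_Q(V) := N^{-|V|} Σ_{d : V → [N]} Π_{(p,p') ∈ cr(V)} q_{d(p),d(p')}`. -/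
noncomputable def tQlim (q : ℕ → ℕ → ℝ) (N : ℕ) (V : Finset (ℕ × ℕ)) : ℂ :=
  (N : ℂ)⁻¹ ^ V.card *
    ∑ d : {p // p ∈ V} → {b // b ∈ Finset.Icc 1 N},
      ∏ x ∈ ppCrossings V, ((q (colorOf V N d x.1) (colorOf V N d x.2) : ℝ) : ℂ)

/-! ### Auxiliary lemmas -/

/-- The number of elements of `[1, n]` whose shifted residue mod `N` equals `j`. -/
def auxm (N n j : ℕ) : ℕ := ((Finset.Icc 1 n).filter (fun b => (b - 1) % N + 1 = j)).card

lemma aux_count_eq (N j n : ℕ) (hN : 1 ≤ N) (hj1 : 1 ≤ j) (hjN : j ≤ N) :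
    auxm N n j = (n + N - j) / N := by
  rw [auxm]
  have himg : (Finset.Icc 1 n).filter (fun b => (b - 1) % N + 1 = j)
      = (Finset.range ((n + N - j) / N)).image (fun k => k * N + j) := by
    ext b
    simp only [mem_filter, mem_Icc, mem_image, mem_range]
    constructor
    · rintro ⟨⟨hb1, hbn⟩, hres⟩
      have hdm := Nat.div_add_mod (b - 1) N
      have hdm' : (b - 1) / N * N = N * ((b - 1) / N) := Nat.mul_comm _ _
      have hb : (b - 1) / N * N + j = b := by omega
      refine ⟨(b - 1) / N, ?_, hb⟩
      have h2 : (b - 1) / N * N ≤ n - j := by omega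
      have hle : (b - 1) / N ≤ (n - j) / N := (Nat.le_div_iff_mul_le hN).mpr h2
      have h3 : (n + N - j) / N = (n - j) / N + 1 := by
        have he : n + N - j = (n - j) + N := by omega
        rw [he, Nat.add_div_right _ hN]
      omega
    · rintro ⟨k, hk, rfl⟩
      have hkn : k * N + j ≤ n := by
        have h0 : 0 < (n + N - j) / N := lt_of_le_of_lt (Nat.zero_le _) hk
        have hn_ge : j ≤ n := by
          by_contra h
          push_neg at h
          have hlt : n + N - j < N := by omega
          have : (n + N - j) / N = 0 := Nat.div_eq_of_lt hlt
          omega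
        have h3 : (n + N - j) / N = (n - j) / N + 1 := by
          have he : n + N - j = (n - j) + N := by omega
          rw [he, Nat.add_div_right _ hN]
        have hk' : k ≤ (n - j) / N := by omega
        have := (Nat.le_div_iff_mul_le hN).mp hk'
        omega
      refine ⟨⟨by omega, hkn⟩, ?_⟩
      have he : k * N + j - 1 = k * N + (j - 1) := by omega
      rw [he, Nat.mul_comm, Nat.mul_add_mod, Nat.mod_eq_of_lt (by omega)]
      omega
  rw [himg, Finset.card_image_of_injective _ ?_, Finset.card_range]
  intro a b h
  simp only at h
  have : a * N = b * N := by omega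
  exact Nat.eq_of_mul_eq_mul_right (by omega) this

lemma aux_count_tendsto (N j : ℕ) (hN : 1 ≤ N) (hj1 : 1 ≤ j) (hjN : j ≤ N) :
    Tendsto (fun n : ℕ => (auxm N n j : ℝ) / n) atTop (nhds (1 / N)) := by
  rw [tendsto_iff_dist_tendsto_zero]
  apply squeeze_zero' (Eventually.of_forall fun n => dist_nonneg) ?_
    (tendsto_const_div_atTop_nhds_zero_nat (N : ℝ))
  filter_upwards [eventually_ge_atTop N, eventually_ge_atTop 1] with n hn hn1
  rw [Real.dist_eq, aux_count_eq N j n hN hj1 hjN]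
  set c : ℕ := (n + N - j) / N with hc
  have hn0 : (0:ℝ) < n := by positivity
  have hN0 : (0:ℝ) < N := by positivity
  have h1n : (c : ℝ) * N ≤ (n : ℝ) + N - j := by
    have h := Nat.div_mul_le_self (n + N - j) N
    have hcast : ((n + N - j : ℕ) : ℝ) = (n : ℝ) + N - j := by
      have : j ≤ n + N := by omega
      push_cast [Nat.cast_sub this]
      ring
    calc (c : ℝ) * N = (((n + N - j) / N * N : ℕ) : ℝ) := by push_cast; ring
      _ ≤ ((n + N - j : ℕ) : ℝ) := by exact_mod_cast h
      _ = (n : ℝ) + N - j := hcast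
  have h2n : (n : ℝ) + N - j < ((c : ℝ) + 1) * N := by
    have h : n + N - j < (c + 1) * N := by
      have : (n + N - j) / N < c + 1 := by omega
      exact (Nat.div_lt_iff_lt_mul (by omega)).mp this
    have hcast : ((n + N - j : ℕ) : ℝ) = (n : ℝ) + N - j := by
      have : j ≤ n + N := by omega
      push_cast [Nat.cast_sub this]
      ring
    calc (n : ℝ) + N - j = ((n + N - j : ℕ) : ℝ) := hcast.symm
      _ < (((c + 1) * N : ℕ) : ℝ) := by exact_mod_cast h
      _ = ((c : ℝ) + 1) * N := by push_cast; ring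
  have hj1' : (1:ℝ) ≤ j := by exact_mod_cast hj1
  have hjN' : (j:ℝ) ≤ N := by exact_mod_cast hjN
  have hN1 : (1:ℝ) ≤ N := by exact_mod_cast hN
  have key : |(c:ℝ)/n - 1/N| = |(c:ℝ) * N - n| / (n * N) := by
    rw [div_sub_div _ _ hn0.ne' hN0.ne', abs_div, abs_of_pos (mul_pos hn0 hN0)]
    ring_nf
  rw [key]
  have habs : |(c:ℝ) * N - n| ≤ N * N := by
    rw [abs_le]
    constructor <;> nlinarith
  calc |(c:ℝ) * N - n| / (n * N) ≤ (N * N) / (n * N) :=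
        div_le_div_of_nonneg_right habs (mul_pos hn0 hN0).le
    _ = N / n := by field_simp

lemma aux_tprod_one (t : Finset (ℕ × ℕ) → ℂ)
    (hone : ∀ a b : ℕ, a < b → t {(a, b)} = 1) (hempty : t ∅ = 1)
    (V : Finset (ℕ × ℕ)) (hV : IsPP V) (n : ℕ)
    (c : {p // p ∈ V} → {b // b ∈ Finset.Icc 1 n}) (hc : Function.Injective c) :
    ∏ b ∈ Finset.Icc 1 n, t (V.filter fun p => colorOf V n c p = b) = 1 := by
  apply Finset.prod_eq_one
  intro b _
  by_cases hex : ∃ p : {p // p ∈ V}, (c p : ℕ) = b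
  · obtain ⟨p, hp⟩ := hex
    have hfil : (V.filter fun p' => colorOf V n c p' = b) = {p.1} := by
      ext p'
      simp only [mem_filter, mem_singleton]
      constructor
      · rintro ⟨hp', he⟩
        rw [colorOf, dif_pos hp'] at he
        have : c ⟨p', hp'⟩ = c p := Subtype.ext (he.trans hp.symm)
        have := hc this
        rw [← this]
      · rintro rfl
        refine ⟨p.2, ?_⟩
        rw [colorOf, dif_pos p.2]
        exact hp
    rw [hfil]
    exact hone p.1.1 p.1.2 (hV.1 p.1 p.2)
  · have hfil : (V.filter fun p' => colorOf V n c p' = b) = ∅ := by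
      apply Finset.filter_eq_empty_iff.mpr
      intro p' hp' he
      rw [colorOf, dif_pos hp'] at he
      exact hex ⟨⟨p', hp'⟩, he⟩
    rw [hfil]
    exact hempty

lemma aux_G_bound (t : Finset (ℕ × ℕ) → ℂ) (hempty : t ∅ = 1)
    (V : Finset (ℕ × ℕ)) (n : ℕ) (c : {p // p ∈ V} → {b // b ∈ Finset.Icc 1 n})
    (Bt : ℝ) (hBt1 : 1 ≤ Bt) (hBt : ∀ W ⊆ V, ‖t W‖ ≤ Bt) :
    ‖∏ b ∈ Finset.Icc 1 n, t (V.filter fun p => colorOf V n c p = b)‖ ≤ Bt ^ V.card := by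
  classical
  set I : Finset ℕ := Finset.image (fun p : {p // p ∈ V} => (c p : ℕ)) Finset.univ with hI
  have hIsub : I ⊆ Finset.Icc 1 n := by
    intro b hb
    simp only [hI, Finset.mem_image, Finset.mem_univ, true_and] at hb
    obtain ⟨p, hp⟩ := hb
    rw [← hp]
    exact (c p).2
  have hprod : ∏ b ∈ Finset.Icc 1 n, t (V.filter fun p => colorOf V n c p = b)
      = ∏ b ∈ I, t (V.filter fun p => colorOf V n c p = b) := by
    refine (Finset.prod_subset hIsub ?_).symm
    intro b _ hbI
    have hfil : V.filter (fun p => colorOf V n c p = b) = ∅ := by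
      apply Finset.filter_eq_empty_iff.mpr
      intro p hp he
      rw [colorOf, dif_pos hp] at he
      exact hbI (Finset.mem_image.mpr ⟨⟨p, hp⟩, Finset.mem_univ _, he⟩)
    rw [hfil]
    exact hempty
  rw [hprod]
  calc ‖∏ b ∈ I, t (V.filter fun p => colorOf V n c p = b)‖
      ≤ ∏ b ∈ I, ‖t (V.filter fun p => colorOf V n c p = b)‖ := norm_prod_le _ _
    _ ≤ ∏ _b ∈ I, Bt :=
        Finset.prod_le_prod (fun _ _ => norm_nonneg _)
          (fun b _ => hBt _ (Finset.filter_subset _ _))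
    _ = Bt ^ I.card := Finset.prod_const _
    _ ≤ Bt ^ V.card := by
        apply pow_le_pow_right₀ hBt1
        calc I.card ≤ (Finset.univ : Finset {p // p ∈ V}).card := Finset.card_image_le
          _ = V.card := by simp [Finset.card_univ]

lemma aux_noninj_card (V : Finset (ℕ × ℕ)) (n : ℕ) (hn : 1 ≤ n) :
    (((Finset.univ : Finset ({p // p ∈ V} → {b // b ∈ Finset.Icc 1 n})).filter
      (fun c => ¬ Function.Injective c))).card ≤ V.card * V.card * n ^ (V.card - 1) := by
  classical
  set k := V.card with hk
  have hb0 : (1 : ℕ) ∈ Finset.Icc 1 n := by simp [hn]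
  set b₀ : {b // b ∈ Finset.Icc 1 n} := ⟨1, hb0⟩ with hb₀
  have hsub : ((Finset.univ : Finset ({p // p ∈ V} → {b // b ∈ Finset.Icc 1 n})).filter
      (fun c => ¬ Function.Injective c)) ⊆
      (Finset.univ.filter fun pp : {p // p ∈ V} × {p // p ∈ V} => pp.1 ≠ pp.2).biUnion
        (fun pp => (Finset.univ : Finset ({p // p ∈ V} → {b // b ∈ Finset.Icc 1 n})).filter
          (fun c => c pp.1 = c pp.2)) := by
    intro c hc
    simp only [Finset.mem_filter, Finset.mem_univ, true_and] at hc
    obtain ⟨a, b, hab, hne⟩ := Function.not_injective_iff.mp hc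
    exact Finset.mem_biUnion.mpr ⟨(a, b), by simp [hne], by simp [hab]⟩
  refine le_trans (Finset.card_le_card hsub) (le_trans Finset.card_biUnion_le ?_)
  have hfib : ∀ pp : {p // p ∈ V} × {p // p ∈ V}, pp.1 ≠ pp.2 →
      ((Finset.univ : Finset ({p // p ∈ V} → {b // b ∈ Finset.Icc 1 n})).filter
        (fun c => c pp.1 = c pp.2)).card
        ≤ n ^ (k - 1) := by
    intro pp hne
    have hmaps : ∀ c ∈ ((Finset.univ : Finset ({p // p ∈ V} → {b // b ∈ Finset.Icc 1 n})).filter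
        (fun c => c pp.1 = c pp.2)),
        Function.update c pp.2 b₀ ∈
          ((Finset.univ : Finset ({p // p ∈ V} → {b // b ∈ Finset.Icc 1 n})).filter
          (fun g => g pp.2 = b₀)) := by
      intro c _
      simp [Function.update_self]
    have hinj : Set.InjOn
        (fun c : {p // p ∈ V} → {b // b ∈ Finset.Icc 1 n} => Function.update c pp.2 b₀)
        ↑((Finset.univ : Finset ({p // p ∈ V} → {b // b ∈ Finset.Icc 1 n})).filter
          (fun c => c pp.1 = c pp.2)) := by
      intro c hc c' hc' he
      simp only [Finset.coe_filter, Set.mem_setOf_eq, Finset.mem_univ, true_and] at hc hc'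
      funext x
      by_cases hx : x = pp.2
      · subst hx
        have h1 : Function.update c pp.2 b₀ pp.1 = Function.update c' pp.2 b₀ pp.1 :=
          congrFun he pp.1
        rw [Function.update_of_ne hne, Function.update_of_ne hne] at h1
        rw [← hc, ← hc', h1]
      · have h1 : Function.update c pp.2 b₀ x = Function.update c' pp.2 b₀ x :=
          congrFun he x
        rwa [Function.update_of_ne hx, Function.update_of_ne hx] at h1
    refine le_trans (Finset.card_le_card_of_injOn _ hmaps hinj) ?_
    have hT : ((Finset.univ : Finset ({p // p ∈ V} → {b // b ∈ Finset.Icc 1 n})).filter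
        (fun g => g pp.2 = b₀))
        = Fintype.piFinset (fun p => if p = pp.2 then ({b₀} : Finset _) else Finset.univ) := by
      ext g
      rw [Fintype.mem_piFinset]
      simp only [Finset.mem_filter, Finset.mem_univ, true_and]
      constructor
      · intro h p
        by_cases hp : p = pp.2
        · subst hp; simp [h]
        · simp [hp]
      · intro h
        have := h pp.2
        simpa using this
    rw [hT, Fintype.card_piFinset]
    have : ∀ p : {p // p ∈ V}, (if p = pp.2 then ({b₀} : Finset _) else Finset.univ).card
        = if p = pp.2 then 1 else n := by
      intro p
      by_cases hp : p = pp.2 <;> simp [hp, Fintype.card_coe]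
    rw [Finset.prod_congr rfl (fun p _ => this p)]
    rw [Finset.prod_ite (fun _ => (1:ℕ)) (fun _ => n)]
    rw [Finset.prod_const, Finset.prod_const, one_pow, one_mul]
    have hcard : (Finset.univ.filter (fun x : {p // p ∈ V} => ¬ x = pp.2)).card = k - 1 := by
      have he : (Finset.univ.filter (fun x : {p // p ∈ V} => ¬ x = pp.2))
          = Finset.univ.erase pp.2 := by
        ext x
        simp [eq_comm]
      rw [he, Finset.card_erase_of_mem (Finset.mem_univ _), Finset.card_univ,
        Fintype.card_coe]
    rw [hcard]
  calc ∑ pp ∈ (Finset.univ.filter fun pp : {p // p ∈ V} × {p // p ∈ V} => pp.1 ≠ pp.2),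
        ((Finset.univ : Finset ({p // p ∈ V} → {b // b ∈ Finset.Icc 1 n})).filter
          (fun c => c pp.1 = c pp.2)).card
      ≤ ∑ pp ∈ (Finset.univ.filter fun pp : {p // p ∈ V} × {p // p ∈ V} => pp.1 ≠ pp.2),
        n ^ (k - 1) :=
        Finset.sum_le_sum (fun pp hpp => hfib pp (Finset.mem_filter.mp hpp).2)
    _ = (Finset.univ.filter fun pp : {p // p ∈ V} × {p // p ∈ V} => pp.1 ≠ pp.2).card
        * n ^ (k - 1) := by rw [Finset.sum_const, smul_eq_mul]
    _ ≤ k * k * n ^ (k - 1) := by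
        apply Nat.mul_le_mul_right
        calc (Finset.univ.filter fun pp : {p // p ∈ V} × {p // p ∈ V} => pp.1 ≠ pp.2).card
            ≤ (Finset.univ : Finset ({p // p ∈ V} × {p // p ∈ V})).card :=
              Finset.card_filter_le _ _
          _ = k * k := by
              rw [Finset.card_univ, Fintype.card_prod, Fintype.card_coe]

lemma aux_mem_cr (V : Finset (ℕ × ℕ)) (x : (ℕ × ℕ) × (ℕ × ℕ)) (hx : x ∈ ppCrossings V) :
    x.1 ∈ V ∧ x.2 ∈ V := by
  have := (Finset.mem_filter.mp hx).1
  exact ⟨(Finset.mem_product.mp this).1, (Finset.mem_product.mp this).2⟩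

lemma aux_regroup (N : ℕ) (hN : 1 ≤ N) (q : ℕ → ℕ → ℝ) (V : Finset (ℕ × ℕ)) (n : ℕ) :
    ∑ c : {p // p ∈ V} → {b // b ∈ Finset.Icc 1 n},
      ∏ x ∈ ppCrossings V,
        ((q ((colorOf V n c x.1 - 1) % N + 1) ((colorOf V n c x.2 - 1) % N + 1) : ℝ) : ℂ)
    = ∑ d : {p // p ∈ V} → {b // b ∈ Finset.Icc 1 N},
        (∏ p : {p // p ∈ V}, ((auxm N n (d p : ℕ) : ℕ) : ℂ))
          * ∏ x ∈ ppCrossings V, ((q (colorOf V N d x.1) (colorOf V N d x.2) : ℝ) : ℂ) := by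
  classical
  simp only [auxm]
  have hmem : ∀ b : ℕ, (b - 1) % N + 1 ∈ Finset.Icc 1 N := by
    intro b
    have := Nat.mod_lt (b - 1) (show 0 < N by omega)
    simp [Finset.mem_Icc]
    omega
  set rmap : {b // b ∈ Finset.Icc 1 n} → {b // b ∈ Finset.Icc 1 N} :=
    fun b => ⟨((b : ℕ) - 1) % N + 1, hmem b⟩ with hrmap
  set A : ({p // p ∈ V} → {b // b ∈ Finset.Icc 1 N}) → ℂ := fun d =>
    ∏ x ∈ ppCrossings V, ((q (colorOf V N d x.1) (colorOf V N d x.2) : ℝ) : ℂ) with hA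
  have hFA : ∀ c : {p // p ∈ V} → {b // b ∈ Finset.Icc 1 n},
      ∏ x ∈ ppCrossings V,
        ((q ((colorOf V n c x.1 - 1) % N + 1) ((colorOf V n c x.2 - 1) % N + 1) : ℝ) : ℂ)
      = A (fun p => rmap (c p)) := by
    intro c
    refine Finset.prod_congr rfl (fun x hx => ?_)
    obtain ⟨hx1, hx2⟩ := aux_mem_cr V x hx
    simp only [hA, colorOf, dif_pos hx1, dif_pos hx2, hrmap]
  rw [Finset.sum_congr rfl (fun c _ => hFA c)]
  rw [← Finset.sum_fiberwise Finset.univ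
    (fun c : {p // p ∈ V} → {b // b ∈ Finset.Icc 1 n} => fun p => rmap (c p))
    (fun c => A (fun p => rmap (c p)))]
  refine Finset.sum_congr rfl (fun d _ => ?_)
  have hstep : ∀ c ∈ Finset.univ.filter
      (fun c : {p // p ∈ V} → {b // b ∈ Finset.Icc 1 n} => (fun p => rmap (c p)) = d),
      A (fun p => rmap (c p)) = A d := by
    intro c hc
    rw [(Finset.mem_filter.mp hc).2]
  rw [Finset.sum_congr rfl hstep, Finset.sum_const, nsmul_eq_mul]
  congr 1
  have hfil : Finset.univ.filter
      (fun c : {p // p ∈ V} → {b // b ∈ Finset.Icc 1 n} => (fun p => rmap (c p)) = d)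
      = Fintype.piFinset (fun p => Finset.univ.filter (fun b => rmap b = d p)) := by
    ext c
    simp only [Finset.mem_filter, Finset.mem_univ, true_and, Fintype.mem_piFinset,
      funext_iff]
  rw [hfil, Fintype.card_piFinset]
  have hcard : ∀ p : {p // p ∈ V},
      ((Finset.univ : Finset {b // b ∈ Finset.Icc 1 n}).filter (fun b => rmap b = d p)).card
      = ((Finset.Icc 1 n).filter (fun b => (b - 1) % N + 1 = (d p : ℕ))).card := by
    intro p
    have hpred : ((Finset.univ : Finset {b // b ∈ Finset.Icc 1 n}).filter
        (fun b => rmap b = d p))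
        = (Finset.Icc 1 n).attach.filter
            (fun b : {x // x ∈ Finset.Icc 1 n} => ((b : ℕ) - 1) % N + 1 = (d p : ℕ)) := by
      rw [Finset.univ_eq_attach]
      refine Finset.filter_congr (fun b _ => ?_)
      simp only [hrmap]
      constructor
      · intro h
        exact congrArg Subtype.val h
      · intro h
        exact Subtype.ext h
    rw [hpred,
      Finset.filter_attach (fun b : ℕ => (b - 1) % N + 1 = (d p : ℕ)) (Finset.Icc 1 n),
      Finset.card_map, Finset.card_attach]
  push_cast
  exact Finset.prod_congr rfl (fun p _ => by exact_mod_cast congrArg (Nat.cast : ℕ → ℂ) (hcard p))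

lemma aux_split {ι : Type*} [Fintype ι] (F G : ι → ℂ) :
    ∑ c : ι, F c * G c = (∑ c : ι, F c) + ∑ c : ι, F c * (G c - 1) := by
  rw [← Finset.sum_add_distrib]
  exact Finset.sum_congr rfl fun c _ => by ring

theorem tendsto_tQn_tQlim (N : ℕ) (hN : 1 ≤ N) (q : ℕ → ℕ → ℝ)
    (hsym : ∀ i ∈ Finset.Icc 1 N, ∀ j ∈ Finset.Icc 1 N, q i j = q j i)
    (t : Finset (ℕ × ℕ) → ℂ)
    (hinv : ∀ V : Finset (ℕ × ℕ), IsPP V → ∀ φ : ℕ → ℕ,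
      StrictMonoOn φ (ppPoints V : Set ℕ) →
      t (V.image fun p => (φ p.1, φ p.2)) = t V)
    (hmul : ∀ k l n : ℕ, 1 ≤ k → k ≤ l → l ≤ n →
      ∀ V₁ V₂ : Finset (ℕ × ℕ), IsPP V₁ → IsPP V₂ →
      ppPoints V₁ = Finset.Icc 1 k ∪ Finset.Icc l n →
      ppPoints V₂ = Finset.Icc (k + 1) (l - 1) →
      t (V₁ ∪ V₂) = t V₁ * t V₂)
    (hone : ∀ a b : ℕ, a < b → t {(a, b)} = 1)
    (hempty : t ∅ = 1)
    (V : Finset (ℕ × ℕ)) (hV : IsPP V) :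
    Tendsto
      (fun n : ℕ => tQn t (fun i j => q ((i - 1) % N + 1) ((j - 1) % N + 1)) n V)
      atTop (nhds (tQlim q N V)) := by
  classical
  have hmem : ∀ b : ℕ, (b - 1) % N + 1 ∈ Finset.Icc 1 N := by
    intro b
    have := Nat.mod_lt (b - 1) (show 0 < N by omega)
    simp [Finset.mem_Icc]
    omega
  -- bounds for the matrix entries
  set Bq : ℝ := 1 + ∑ ij ∈ Finset.Icc 1 N ×ˢ Finset.Icc 1 N, |q ij.1 ij.2| with hBqdef
  have hBq1 : 1 ≤ Bq := by
    have h0 : 0 ≤ ∑ ij ∈ Finset.Icc 1 N ×ˢ Finset.Icc 1 N, |q ij.1 ij.2| :=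
      Finset.sum_nonneg fun _ _ => abs_nonneg _
    simp only [hBqdef]
    linarith
  have hBq : ∀ i ∈ Finset.Icc 1 N, ∀ j ∈ Finset.Icc 1 N, |q i j| ≤ Bq := by
    intro i hi j hj
    have hm : (i, j) ∈ Finset.Icc 1 N ×ˢ Finset.Icc 1 N := Finset.mem_product.mpr ⟨hi, hj⟩
    have h1 := Finset.single_le_sum
      (f := fun ij : ℕ × ℕ => |q ij.1 ij.2|) (fun _ _ => abs_nonneg _) hm
    simp only [hBqdef]
    linarith
  -- bounds for t
  set Bt : ℝ := 1 + ∑ W ∈ V.powerset, ‖t W‖ with hBtdef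
  have hBt1 : 1 ≤ Bt := by
    have h0 : 0 ≤ ∑ W ∈ V.powerset, ‖t W‖ := Finset.sum_nonneg fun _ _ => norm_nonneg _
    simp only [hBtdef]
    linarith
  have hBt : ∀ W ⊆ V, ‖t W‖ ≤ Bt := by
    intro W hW
    have h1 := Finset.single_le_sum (f := fun W => ‖t W‖)
      (fun _ _ => norm_nonneg _) (Finset.mem_powerset.mpr hW)
    simp only [hBtdef]
    linarith
  set C : ℝ := Bq ^ (ppCrossings V).card * (Bt ^ V.card + 1) with hCdef
  have hC0 : 0 ≤ C := by positivity
  -- decomposition of tQn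
  have hkey : ∀ n : ℕ,
      tQn t (fun i j => q ((i - 1) % N + 1) ((j - 1) % N + 1)) n V
      = (∑ d : {p // p ∈ V} → {b // b ∈ Finset.Icc 1 N},
          (∏ p : {p // p ∈ V}, ((auxm N n (d p : ℕ) : ℂ) * (n : ℂ)⁻¹))
            * ∏ x ∈ ppCrossings V, ((q (colorOf V N d x.1) (colorOf V N d x.2) : ℝ) : ℂ))
        + (n : ℂ)⁻¹ ^ V.card *
          ∑ c : {p // p ∈ V} → {b // b ∈ Finset.Icc 1 n},
            (∏ x ∈ ppCrossings V,
              ((q ((colorOf V n c x.1 - 1) % N + 1) ((colorOf V n c x.2 - 1) % N + 1) : ℝ) : ℂ))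
            * ((∏ b ∈ Finset.Icc 1 n, t (V.filter fun p => colorOf V n c p = b)) - 1) := by
    intro n
    simp only [tQn]
    rw [aux_split, mul_add]
    congr 1
    rw [aux_regroup N hN q V n, Finset.mul_sum]
    refine Finset.sum_congr rfl fun d _ => ?_
    rw [Finset.prod_mul_distrib, Finset.prod_const, Finset.card_univ, Fintype.card_coe]
    ring
  -- the main term converges to tQlim
  have hMain : Tendsto (fun n : ℕ =>
      ∑ d : {p // p ∈ V} → {b // b ∈ Finset.Icc 1 N},
        (∏ p : {p // p ∈ V}, ((auxm N n (d p : ℕ) : ℂ) * (n : ℂ)⁻¹))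
          * ∏ x ∈ ppCrossings V, ((q (colorOf V N d x.1) (colorOf V N d x.2) : ℝ) : ℂ))
      atTop (nhds (tQlim q N V)) := by
    have hlim : tQlim q N V = ∑ d : {p // p ∈ V} → {b // b ∈ Finset.Icc 1 N},
        (∏ _p : {p // p ∈ V}, (N : ℂ)⁻¹)
          * ∏ x ∈ ppCrossings V, ((q (colorOf V N d x.1) (colorOf V N d x.2) : ℝ) : ℂ) := by
      rw [tQlim, Finset.mul_sum]
      refine Finset.sum_congr rfl fun d _ => ?_
      rw [Finset.prod_const, Finset.card_univ, Fintype.card_coe]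
    rw [hlim]
    refine tendsto_finset_sum _ fun d _ => ?_
    refine Tendsto.mul_const _ ?_
    refine tendsto_finset_prod _ fun p _ => ?_
    obtain ⟨hd1, hd2⟩ := Finset.mem_Icc.mp (d p).2
    have hreal := aux_count_tendsto N (d p) hN hd1 hd2
    have hC' := (Complex.continuous_ofReal.tendsto _).comp hreal
    have heq : ∀ n : ℕ, (((auxm N n (d p : ℕ) : ℝ) / (n : ℝ) : ℝ) : ℂ)
        = (auxm N n (d p : ℕ) : ℂ) * (n : ℂ)⁻¹ := by
      intro n
      push_cast
      ring
    have hval : ((1 / (N : ℝ) : ℝ) : ℂ) = (N : ℂ)⁻¹ := by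
      push_cast
      ring
    rw [← hval]
    exact hC'.congr heq
  -- the error term converges to 0
  have hErr : Tendsto (fun n : ℕ =>
      (n : ℂ)⁻¹ ^ V.card *
        ∑ c : {p // p ∈ V} → {b // b ∈ Finset.Icc 1 n},
          (∏ x ∈ ppCrossings V,
            ((q ((colorOf V n c x.1 - 1) % N + 1) ((colorOf V n c x.2 - 1) % N + 1) : ℝ) : ℂ))
          * ((∏ b ∈ Finset.Icc 1 n, t (V.filter fun p => colorOf V n c p = b)) - 1))
      atTop (nhds 0) := by
    apply squeeze_zero_norm' (a := fun n : ℕ => (C * (V.card * V.card)) / n) ?_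
      (tendsto_const_div_atTop_nhds_zero_nat _)
    filter_upwards [eventually_ge_atTop 1] with n hn
    have hn0 : (0:ℝ) < n := by exact_mod_cast Nat.lt_of_lt_of_le Nat.zero_lt_one hn
    -- per-term bound
    have hterm : ∀ c : {p // p ∈ V} → {b // b ∈ Finset.Icc 1 n},
        ‖(∏ x ∈ ppCrossings V,
            ((q ((colorOf V n c x.1 - 1) % N + 1) ((colorOf V n c x.2 - 1) % N + 1) : ℝ) : ℂ))
          * ((∏ b ∈ Finset.Icc 1 n, t (V.filter fun p => colorOf V n c p = b)) - 1)‖ ≤ C := by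
      intro c
      rw [norm_mul]
      have hF : ‖∏ x ∈ ppCrossings V,
          ((q ((colorOf V n c x.1 - 1) % N + 1) ((colorOf V n c x.2 - 1) % N + 1) : ℝ) : ℂ)‖
          ≤ Bq ^ (ppCrossings V).card := by
        rw [norm_prod]
        calc ∏ x ∈ ppCrossings V, ‖((q ((colorOf V n c x.1 - 1) % N + 1)
              ((colorOf V n c x.2 - 1) % N + 1) : ℝ) : ℂ)‖
            ≤ ∏ _x ∈ ppCrossings V, Bq := by
              refine Finset.prod_le_prod (fun _ _ => norm_nonneg _) (fun x _ => ?_)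
              rw [Complex.norm_real, Real.norm_eq_abs]
              exact hBq _ (hmem _) _ (hmem _)
          _ = Bq ^ (ppCrossings V).card := Finset.prod_const _
      have hG : ‖(∏ b ∈ Finset.Icc 1 n, t (V.filter fun p => colorOf V n c p = b)) - 1‖
          ≤ Bt ^ V.card + 1 := by
        refine le_trans (norm_sub_le _ _) ?_
        rw [norm_one]
        exact add_le_add_left (aux_G_bound t hempty V n c Bt hBt1 hBt) 1
      exact mul_le_mul hF hG (norm_nonneg _) (by positivity)
    -- restrict the sum to non-injective colorings
    have hzero : ∀ c ∈ (Finset.univ : Finset ({p // p ∈ V} → {b // b ∈ Finset.Icc 1 n})),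
        c ∉ (Finset.univ : Finset ({p // p ∈ V} → {b // b ∈ Finset.Icc 1 n})).filter
          (fun c => ¬ Function.Injective c) →
        (∏ x ∈ ppCrossings V,
            ((q ((colorOf V n c x.1 - 1) % N + 1) ((colorOf V n c x.2 - 1) % N + 1) : ℝ) : ℂ))
          * ((∏ b ∈ Finset.Icc 1 n, t (V.filter fun p => colorOf V n c p = b)) - 1) = 0 := by
      intro c _ hc
      have hinj : Function.Injective c := by
        by_contra h
        exact hc (Finset.mem_filter.mpr ⟨Finset.mem_univ _, h⟩)
      rw [aux_tprod_one t hone hempty V hV n c hinj, sub_self, mul_zero]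
    have hsum : ∑ c : {p // p ∈ V} → {b // b ∈ Finset.Icc 1 n},
        (∏ x ∈ ppCrossings V,
          ((q ((colorOf V n c x.1 - 1) % N + 1) ((colorOf V n c x.2 - 1) % N + 1) : ℝ) : ℂ))
        * ((∏ b ∈ Finset.Icc 1 n, t (V.filter fun p => colorOf V n c p = b)) - 1)
        = ∑ c ∈ (Finset.univ : Finset ({p // p ∈ V} → {b // b ∈ Finset.Icc 1 n})).filter
            (fun c => ¬ Function.Injective c),
          (∏ x ∈ ppCrossings V,
            ((q ((colorOf V n c x.1 - 1) % N + 1) ((colorOf V n c x.2 - 1) % N + 1) : ℝ) : ℂ))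
          * ((∏ b ∈ Finset.Icc 1 n, t (V.filter fun p => colorOf V n c p = b)) - 1) :=
      (Finset.sum_subset (Finset.filter_subset _ _) hzero).symm
    rw [norm_mul, norm_pow, norm_inv, Complex.norm_natCast, hsum]
    have hcardb : ((((Finset.univ : Finset ({p // p ∈ V} → {b // b ∈ Finset.Icc 1 n})).filter
        (fun c => ¬ Function.Injective c)).card : ℝ))
        ≤ (V.card : ℝ) * V.card * (n : ℝ) ^ (V.card - 1) := by
      have := aux_noninj_card V n hn
      calc ((((Finset.univ : Finset ({p // p ∈ V} → {b // b ∈ Finset.Icc 1 n})).filter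
          (fun c => ¬ Function.Injective c)).card : ℝ))
          ≤ ((V.card * V.card * n ^ (V.card - 1) : ℕ) : ℝ) := by exact_mod_cast this
        _ = (V.card : ℝ) * V.card * (n : ℝ) ^ (V.card - 1) := by push_cast; ring
    have hnorm : ‖∑ c ∈ (Finset.univ : Finset ({p // p ∈ V} → {b // b ∈ Finset.Icc 1 n})).filter
          (fun c => ¬ Function.Injective c),
        (∏ x ∈ ppCrossings V,
          ((q ((colorOf V n c x.1 - 1) % N + 1) ((colorOf V n c x.2 - 1) % N + 1) : ℝ) : ℂ))
        * ((∏ b ∈ Finset.Icc 1 n, t (V.filter fun p => colorOf V n c p = b)) - 1)‖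
        ≤ (V.card : ℝ) * V.card * (n : ℝ) ^ (V.card - 1) * C := by
      refine le_trans (norm_sum_le _ _) ?_
      calc ∑ c ∈ (Finset.univ : Finset ({p // p ∈ V} → {b // b ∈ Finset.Icc 1 n})).filter
            (fun c => ¬ Function.Injective c),
          ‖(∏ x ∈ ppCrossings V,
            ((q ((colorOf V n c x.1 - 1) % N + 1) ((colorOf V n c x.2 - 1) % N + 1) : ℝ) : ℂ))
          * ((∏ b ∈ Finset.Icc 1 n, t (V.filter fun p => colorOf V n c p = b)) - 1)‖
          ≤ ∑ _c ∈ (Finset.univ : Finset ({p // p ∈ V} → {b // b ∈ Finset.Icc 1 n})).filter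
            (fun c => ¬ Function.Injective c), C :=
            Finset.sum_le_sum (fun c _ => hterm c)
        _ = (((Finset.univ : Finset ({p // p ∈ V} → {b // b ∈ Finset.Icc 1 n})).filter
            (fun c => ¬ Function.Injective c)).card : ℝ) * C := by
            rw [Finset.sum_const, nsmul_eq_mul]
        _ ≤ (V.card : ℝ) * V.card * (n : ℝ) ^ (V.card - 1) * C :=
            mul_le_mul_of_nonneg_right hcardb hC0
    calc ((n : ℝ))⁻¹ ^ V.card * ‖∑ c ∈ (Finset.univ : Finset
            ({p // p ∈ V} → {b // b ∈ Finset.Icc 1 n})).filter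
            (fun c => ¬ Function.Injective c),
          (∏ x ∈ ppCrossings V,
            ((q ((colorOf V n c x.1 - 1) % N + 1) ((colorOf V n c x.2 - 1) % N + 1) : ℝ) : ℂ))
          * ((∏ b ∈ Finset.Icc 1 n, t (V.filter fun p => colorOf V n c p = b)) - 1)‖
        ≤ ((n : ℝ))⁻¹ ^ V.card * ((V.card : ℝ) * V.card * (n : ℝ) ^ (V.card - 1) * C) :=
          mul_le_mul_of_nonneg_left hnorm (by positivity)
      _ ≤ C * ((V.card : ℝ) * V.card) / n := by
          rcases Nat.eq_zero_or_pos V.card with hk0 | hkpos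
          · rw [hk0]
            simp
          · refine le_of_eq ?_
            obtain ⟨m, hm⟩ : ∃ m, V.card = m + 1 := ⟨V.card - 1, by omega⟩
            have hsimp : (m + 1 - 1 : ℕ) = m := by omega
            have hne : (n : ℝ) ≠ 0 := hn0.ne'
            rw [hm, hsimp]
            field_simp
            ring
            rw [inv_pow]
            field_simp
  have hfinal := hMain.add hErr
  rw [add_zero] at hfinal
  exact hfinal.congr (fun n => (hkey n).symm)
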